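/- Let M be a connected matroid on a finite ground set E and let e₁, e₂ ∈ E be two distinct elements. Then there exist bases B₁ and B₂ of M such that B₁ − B₂ = {e₁} and B₂ − B₁ = {e₂}. -/

import Mathlib

open Set Matroid

/-- A circuit is a minimal dependent subset of the ground set. -/
def Matroid.Circuit' {α : Type*} (M : Matroid α) (C : Set α) : Prop :=
  C ⊆ M.E ∧ ¬ M.Indep C ∧ ∀ D, D ⊂ C → M.Indep D

/-- A separator of `M`: a subset of the ground set such that every circuit lies inside it
or inside its complement. -/
def Matroid.Separator' {α : Type*} (M : Matroid α) (X : Set α) : Prop :=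
  X ⊆ M.E ∧ ∀ C, M.Circuit' C → C ⊆ X ∨ C ⊆ M.E \ X

/-- A matroid is connected if its only separators are `∅` and the ground set. -/
def Matroid.Connected' {α : Type*} (M : Matroid α) : Prop :=
  ∀ X, M.Separator' X → X = ∅ ∨ X = M.E


section helpers
variable {α : Type*} [Fintype α] {M : Matroid α} {C D C₁ C₂ : Set α}

lemma circ_eq_of_subset (hC : M.Circuit' C) (hD : M.Circuit' D) (h : C ⊆ D) : C = D := by
  by_contra hne
  exact hC.2.1 (hD.2.2 C (h.ssubset_of_ne hne))

lemma exists_circuit_subset_aux :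
    ∀ n, ∀ D : Set α, D.ncard ≤ n → D ⊆ M.E → ¬ M.Indep D → ∃ C, M.Circuit' C ∧ C ⊆ D := by
  intro n
  induction n with
  | zero =>
    intro D hn hDE hdep
    rw [Nat.le_zero, Set.ncard_eq_zero D.toFinite] at hn
    exact absurd (hn ▸ M.empty_indep) hdep
  | succ n IH =>
    intro D hn hDE hdep
    by_cases h : ∀ D' , D' ⊂ D → M.Indep D'
    · exact ⟨D, ⟨hDE, hdep, h⟩, subset_rfl⟩
    · push_neg at h
      obtain ⟨D', hss, hdep'⟩ := h
      have hlt : D'.ncard < D.ncard := Set.ncard_lt_ncard hss D.toFinite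
      obtain ⟨C, hC, hCD⟩ := IH D' (by omega) (hss.subset.trans hDE) hdep'
      exact ⟨C, hC, hCD.trans hss.subset⟩

lemma exists_circuit_subset (hDE : D ⊆ M.E) (hdep : ¬ M.Indep D) :
    ∃ C, M.Circuit' C ∧ C ⊆ D :=
  exists_circuit_subset_aux D.ncard D le_rfl hDE hdep

lemma weak_elim (hC₁ : M.Circuit' C₁) (hC₂ : M.Circuit' C₂) (hne : C₁ ≠ C₂) {e : α}
    (he₁ : e ∈ C₁) (he₂ : e ∈ C₂) :
    ∃ C₃, M.Circuit' C₃ ∧ C₃ ⊆ (C₁ ∪ C₂) \ {e} := by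
  set X := C₁ ∪ C₂ with hX
  have hXE : X ⊆ M.E := union_subset hC₁.1 hC₂.1
  refine exists_circuit_subset ((diff_subset).trans hXE) ?_
  intro hind
  -- pick f ∈ C₁ \ C₂
  have hf : ∃ f, f ∈ C₁ \ C₂ := by
    by_contra h
    push_neg at h
    simp only [mem_diff, not_and, not_not] at h
    exact hne (circ_eq_of_subset hC₁ hC₂ (fun x hx => by
      by_contra hxc; exact hxc (h x hx)))
  obtain ⟨f, hfC₁, hfC₂⟩ := hf
  -- I₀ = C₁ \ {f} is independent, extend to basis I of X
  have hI₀ : M.Indep (C₁ \ {f}) := hC₁.2.2 _ (sdiff_singleton_ssubset.mpr hfC₁)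
  obtain ⟨I, hI, hI₀I⟩ := hI₀.subset_isBasis_of_subset ((diff_subset).trans subset_union_left) hXE
  obtain ⟨J, hJ, hDJ⟩ := hind.subset_isBasis_of_subset (diff_subset (t := {e})) hXE
  have hcard : I.encard = J.encard := hI.encard_eq_encard hJ
  have hIJn : I.ncard = J.ncard := by
    have := congrArg ENat.toNat hcard
    simpa [Set.ncard] using this
  have hfI : f ∉ I := by
    intro hfI
    have : C₁ ⊆ I := by
      intro x hx
      by_cases hxf : x = f
      · exact hxf ▸ hfI
      · exact hI₀I ⟨hx, hxf⟩
    exact hC₁.2.1 (hI.indep.subset this)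
  have hg : ∃ g, g ∈ C₂ ∧ g ∉ I := by
    by_contra h
    push_neg at h
    exact hC₂.2.1 (hI.indep.subset h)
  obtain ⟨g, hgC₂, hgI⟩ := hg
  have hgf : g ≠ f := fun h => hfC₂ (h ▸ hgC₂)
  have heX : e ∈ X := Or.inl he₁
  have hfX : f ∈ X := Or.inl hfC₁
  have hgX : g ∈ X := Or.inr hgC₂
  -- cardinality contradiction
  have hIsub : I ⊆ (X \ {g}) \ {f} := fun x hx =>
    ⟨⟨hI.subset hx, fun h => hgI (h ▸ hx)⟩, fun h => hfI (h ▸ hx)⟩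
  have h1 : (X \ {e}).ncard + 1 = X.ncard := Set.ncard_diff_singleton_add_one heX X.toFinite
  have h2 : ((X \ {g}) \ {f}).ncard + 1 = (X \ {g}).ncard :=
    Set.ncard_diff_singleton_add_one ⟨hfX, hgf.symm⟩ (X \ {g}).toFinite
  have h3 : (X \ {g}).ncard + 1 = X.ncard := Set.ncard_diff_singleton_add_one hgX X.toFinite
  have h4 : I.ncard ≤ ((X \ {g}) \ {f}).ncard :=
    Set.ncard_le_ncard hIsub ((X \ {g}) \ {f}).toFinite
  have h5 : (X \ {e}).ncard ≤ J.ncard := Set.ncard_le_ncard hDJ J.toFinite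
  omega

end helpers

section helpers2
set_option linter.unusedSectionVars false
variable {α : Type*} [Fintype α] {M : Matroid α} {C D C₁ C₂ : Set α}

lemma circ_nss (hC : M.Circuit' C) (hD : M.Circuit' D) (h : C ⊆ D) (hne : C ≠ D) : False :=
  hne (circ_eq_of_subset hC hD h)

lemma strong_elim :
    ∀ n, ∀ C₁ C₂ : Set α, ∀ e f : α, (C₁ ∪ C₂).ncard ≤ n →
      M.Circuit' C₁ → M.Circuit' C₂ → e ∈ C₁ → e ∈ C₂ → f ∈ C₁ → f ∉ C₂ →
      ∃ C, M.Circuit' C ∧ f ∈ C ∧ C ⊆ (C₁ ∪ C₂) \ {e} := by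
  intro n
  induction n with
  | zero =>
    intro C₁ C₂ e f hn hC₁ hC₂ he₁ he₂ hf₁ hf₂
    rw [Nat.le_zero, Set.ncard_eq_zero (C₁ ∪ C₂).toFinite] at hn
    have : f ∈ C₁ ∪ C₂ := Or.inl hf₁
    rw [hn] at this
    exact this.elim
  | succ n IH =>
    intro C₁ C₂ e f hn hC₁ hC₂ he₁ he₂ hf₁ hf₂
    have hne : C₁ ≠ C₂ := fun h => hf₂ (h ▸ hf₁)
    obtain ⟨C₃, hC₃, hC₃sub⟩ := weak_elim hC₁ hC₂ hne he₁ he₂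
    by_cases hfC₃ : f ∈ C₃
    · exact ⟨C₃, hC₃, hfC₃, hC₃sub⟩
    have heC₃ : e ∉ C₃ := fun h => (hC₃sub h).2 rfl
    -- C₃ ⊄ C₁, so pick g ∈ C₃ \ C₁
    have hg : ∃ g, g ∈ C₃ ∧ g ∉ C₁ := by
      by_contra h
      push_neg at h
      exact circ_nss hC₃ hC₁ h (fun hh => heC₃ (hh ▸ he₁))
    obtain ⟨g, hgC₃, hgC₁⟩ := hg
    have hgC₂ : g ∈ C₂ := ((hC₃sub hgC₃).1).resolve_left hgC₁
    have hfC₂₃ : f ∉ C₂ ∪ C₃ := fun h => h.elim hf₂ hfC₃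
    have hsub1 : C₂ ∪ C₃ ⊆ C₁ ∪ C₂ := union_subset subset_union_right
      (hC₃sub.trans (diff_subset))
    have hlt1 : (C₂ ∪ C₃).ncard < (C₁ ∪ C₂).ncard :=
      Set.ncard_lt_ncard ⟨hsub1, fun h => hfC₂₃ (h (Or.inl hf₁))⟩ (C₁ ∪ C₂).toFinite
    obtain ⟨C₄, hC₄, heC₄, hC₄sub⟩ := IH C₂ C₃ g e (by omega) hC₂ hC₃ hgC₂ hgC₃ he₂ heC₃
    have hfC₄ : f ∉ C₄ := fun h => hfC₂₃ (hC₄sub h).1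
    have hgC₄ : g ∉ C₄ := fun h => (hC₄sub h).2 rfl
    have hsub2 : C₁ ∪ C₄ ⊆ C₁ ∪ C₂ := union_subset subset_union_left
      ((hC₄sub.trans (diff_subset)).trans hsub1)
    have hgU : g ∉ C₁ ∪ C₄ := fun h => h.elim hgC₁ hgC₄
    have hlt2 : (C₁ ∪ C₄).ncard < (C₁ ∪ C₂).ncard :=
      Set.ncard_lt_ncard ⟨hsub2, fun h => hgU (h (Or.inr hgC₂))⟩ (C₁ ∪ C₂).toFinite
    obtain ⟨C₅, hC₅, hfC₅, hC₅sub⟩ := IH C₁ C₄ e f (by omega) hC₁ hC₄ he₁ heC₄ hf₁ hfC₄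
    exact ⟨C₅, hC₅, hfC₅, hC₅sub.trans (diff_subset_diff_left hsub2)⟩

lemma conn_trans :
    ∀ n, ∀ C₁ C₂ : Set α, ∀ e g : α, (C₂ \ C₁).ncard ≤ n →
      M.Circuit' C₁ → M.Circuit' C₂ → e ∈ C₁ → g ∈ C₂ → (C₁ ∩ C₂).Nonempty →
      ∃ C, M.Circuit' C ∧ e ∈ C ∧ g ∈ C := by
  intro n
  induction n with
  | zero =>
    intro C₁ C₂ e g hn hC₁ hC₂ he hg _
    rw [Nat.le_zero, Set.ncard_eq_zero (C₂ \ C₁).toFinite, diff_eq_empty] at hn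
    exact ⟨C₁, hC₁, he, (circ_eq_of_subset hC₂ hC₁ hn) ▸ hg⟩
  | succ n IH =>
    intro C₁ C₂ e g hn hC₁ hC₂ he hg hint
    by_cases hgC₁ : g ∈ C₁
    · exact ⟨C₁, hC₁, he, hgC₁⟩
    by_cases heC₂ : e ∈ C₂
    · exact ⟨C₂, hC₂, heC₂, hg⟩
    obtain ⟨x, hxC₁, hxC₂⟩ := hint
    obtain ⟨C₃, hC₃, heC₃, hC₃sub⟩ :=
      strong_elim (C₁ ∪ C₂).ncard C₁ C₂ x e le_rfl hC₁ hC₂ hxC₁ hxC₂ he heC₂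
    by_cases hgC₃ : g ∈ C₃
    · exact ⟨C₃, hC₃, heC₃, hgC₃⟩
    have hxC₃ : x ∉ C₃ := fun h => (hC₃sub h).2 rfl
    have hy : ∃ y, y ∈ C₃ ∧ y ∉ C₁ := by
      by_contra h
      push_neg at h
      exact circ_nss hC₃ hC₁ h (fun hh => hxC₃ (hh ▸ hxC₁))
    obtain ⟨y, hyC₃, hyC₁⟩ := hy
    have hyC₂ : y ∈ C₂ := ((hC₃sub hyC₃).1).resolve_left hyC₁
    obtain ⟨C₄, hC₄, hgC₄, hC₄sub⟩ :=
      strong_elim (C₂ ∪ C₃).ncard C₂ C₃ y g le_rfl hC₂ hC₃ hyC₂ hyC₃ hg hgC₃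
    have hyC₄ : y ∉ C₄ := fun h => (hC₄sub h).2 rfl
    -- C₄ meets C₁
    have hC₄C₂ : ∀ z ∈ C₄, z ∉ C₁ → z ∈ C₂ := by
      intro z hz hzC₁
      rcases (hC₄sub hz).1 with h | h
      · exact h
      · exact ((hC₃sub h).1).resolve_left hzC₁
    have hint' : (C₁ ∩ C₄).Nonempty := by
      rw [Set.nonempty_iff_ne_empty]
      intro h
      rw [Set.eq_empty_iff_forall_notMem] at h
      have hsub : C₄ ⊆ C₂ := fun z hz =>
        hC₄C₂ z hz (fun hzC₁ => (h z ⟨hzC₁, hz⟩).elim)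
      exact circ_nss hC₄ hC₂ hsub (fun hh => hyC₄ (hh ▸ hyC₂))
    have hssub : C₄ \ C₁ ⊂ C₂ \ C₁ := by
      constructor
      · intro z hz
        exact ⟨hC₄C₂ z hz.1 hz.2, hz.2⟩
      · intro h
        exact hyC₄ (h ⟨hyC₂, hyC₁⟩).1
    have hlt : (C₄ \ C₁).ncard < (C₂ \ C₁).ncard :=
      Set.ncard_lt_ncard hssub (C₂ \ C₁).toFinite
    exact IH C₁ C₄ e g (by omega) hC₁ hC₄ he hgC₄ hint'

end helpers2

section main
set_option linter.unusedSectionVars false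
variable {α : Type*} [Fintype α] {M : Matroid α}

lemma exists_circuit_both (hconn : M.Connected') {e₁ e₂ : α}
    (h₁ : e₁ ∈ M.E) (h₂ : e₂ ∈ M.E) (hne : e₁ ≠ e₂) :
    ∃ C, M.Circuit' C ∧ e₁ ∈ C ∧ e₂ ∈ C := by
  set X : Set α := {x | x ∈ M.E ∧ (x = e₁ ∨ ∃ C, M.Circuit' C ∧ e₁ ∈ C ∧ x ∈ C)} with hXdef
  have hsep : M.Separator' X := by
    refine ⟨fun x hx => hx.1, fun C hC => ?_⟩
    by_cases h : ∃ x ∈ C, x ∈ X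
    · left
      obtain ⟨x, hxC, hxX⟩ := h
      intro y hyC
      refine ⟨hC.1 hyC, Or.inr ?_⟩
      rcases hxX.2 with rfl | ⟨C', hC', he₁C', hxC'⟩
      · exact conn_trans (C \ C).ncard C C x y le_rfl hC hC hxC hyC ⟨x, hxC, hxC⟩
      · exact conn_trans (C \ C').ncard C' C e₁ y le_rfl hC' hC he₁C' hyC ⟨x, hxC', hxC⟩
    · right
      push_neg at h
      exact fun y hy => ⟨hC.1 hy, h y hy⟩
  rcases hconn X hsep with hX | hX
  · have he₁X : e₁ ∈ X := ⟨h₁, Or.inl rfl⟩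
    rw [hX] at he₁X
    exact he₁X.elim
  · have : e₂ ∈ X := hX ▸ h₂
    rcases this.2 with h | ⟨C, hC, he₁, he₂⟩
    · exact absurd h.symm hne
    · exact ⟨C, hC, he₁, he₂⟩

theorem exists_bases_exchange_of_connected' {α : Type*} [Fintype α]
    (M : Matroid α) (hconn : M.Connected')
    (e₁ e₂ : α) (h₁ : e₁ ∈ M.E) (h₂ : e₂ ∈ M.E) (hne : e₁ ≠ e₂) :
    ∃ B₁ B₂ : Set α, M.IsBase B₁ ∧ M.IsBase B₂ ∧ B₁ \ B₂ = {e₁} ∧ B₂ \ B₁ = {e₂} := by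
  obtain ⟨C, hC, he₁C, he₂C⟩ := exists_circuit_both hconn h₁ h₂ hne
  have hI₀ : M.Indep (C \ {e₂}) := hC.2.2 _ (sdiff_singleton_ssubset.mpr he₂C)
  obtain ⟨B₁, hB₁, hI₀B₁⟩ := hI₀.exists_isBase_superset
  have he₂B₁ : e₂ ∉ B₁ := by
    intro h
    have hsub : C ⊆ B₁ := fun x hx => by
      by_cases hxe : x = e₂
      · exact hxe ▸ h
      · exact hI₀B₁ ⟨hx, hxe⟩
    exact hC.2.1 (hB₁.indep.subset hsub)
  have he₁B₁ : e₁ ∈ B₁ := hI₀B₁ ⟨he₁C, hne⟩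
  have hCins : C ⊆ insert e₂ B₁ := fun x hx => by
    by_cases hxe : x = e₂
    · exact hxe ▸ mem_insert _ _
    · exact Or.inr (hI₀B₁ ⟨hx, hxe⟩)
  have hind : M.Indep (insert e₂ B₁ \ {e₁}) := by
    by_contra hdep
    have hsubE : insert e₂ B₁ \ {e₁} ⊆ M.E :=
      (diff_subset).trans (insert_subset h₂ hB₁.subset_ground)
    obtain ⟨C', hC', hC'sub⟩ := exists_circuit_subset hsubE hdep
    have he₂C' : e₂ ∈ C' := by
      by_contra h
      have : C' ⊆ B₁ := fun x hx => by
        rcases (hC'sub hx).1 with rfl | hxB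
        · exact absurd hx h
        · exact hxB
      exact hC'.2.1 (hB₁.indep.subset this)
    have hCC' : C ≠ C' := fun h => (hC'sub (h ▸ he₁C)).2 rfl
    obtain ⟨C₃, hC₃, hC₃sub⟩ := weak_elim hC hC' hCC' he₂C he₂C'
    have : C₃ ⊆ B₁ := by
      intro x hx
      obtain ⟨hxU, hxe₂⟩ := hC₃sub hx
      rcases hxU with hxC | hxC'
      · rcases hCins hxC with rfl | hxB
        · exact absurd rfl hxe₂
        · exact hxB
      · rcases (hC'sub hxC').1 with rfl | hxB
        · exact absurd rfl hxe₂
        · exact hxB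
    exact hC₃.2.1 (hB₁.indep.subset this)
  have hB₂ : M.IsBase (insert e₂ B₁ \ {e₁}) :=
    hB₁.exchange_isBase_of_indep' he₁B₁ he₂B₁ hind
  refine ⟨B₁, insert e₂ B₁ \ {e₁}, hB₁, hB₂, ?_, ?_⟩
  · ext x
    simp only [mem_diff, mem_insert_iff, mem_singleton_iff, not_and, not_not]
    constructor
    · rintro ⟨hxB, h⟩
      by_contra hx
      exact hx (h (Or.inr hxB))
    · rintro rfl
      exact ⟨he₁B₁, fun _ => rfl⟩
  · ext x
    simp only [mem_diff, mem_insert_iff, mem_singleton_iff]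
    constructor
    · rintro ⟨⟨rfl | hxB, _⟩, hxB₁⟩
      · rfl
      · exact absurd hxB hxB₁
    · rintro rfl
      exact ⟨⟨Or.inl rfl, hne.symm⟩, he₂B₁⟩

end main


/-- In a connected matroid, for any two distinct elements `e₁, e₂` of the ground set there
are bases `B₁, B₂` with `B₁ − B₂ = {e₁}` and `B₂ − B₁ = {e₂}`. -/
theorem exists_bases_exchange_of_connected {α : Type*} [Fintype α]
    (M : Matroid α) (hconn : M.Connected')
    (e₁ e₂ : α) (h₁ : e₁ ∈ M.E) (h₂ : e₂ ∈ M.E) (hne : e₁ ≠ e₂) :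
    ∃ B₁ B₂ : Set α, M.IsBase B₁ ∧ M.IsBase B₂ ∧ B₁ \ B₂ = {e₁} ∧ B₂ \ B₁ = {e₂} := by
  exact exists_bases_exchange_of_connected' M hconn e₁ e₂ h₁ h₂ hne
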